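/- Fix an integer r ≥ 1. The 2-color Ramsey number of the matching rK_2 equals 3r − 1. That is: (1) for every coloring of the edges of the complete graph K_{3r−1} with 2 colors, some color class contains r pairwise disjoint edges; and (2) there exists a coloring of the edges of K_{3r−2} with 2 colors in which no color class contains r pairwise disjoint edges. -/

import Mathlib

open Finset

/-- Two edges of a complete graph (elements of `Sym2 (Fin n)`) are disjoint if they
share no vertex. -/
def EdgeDisjoint {n : ℕ} (e f : Sym2 (Fin n)) : Prop := ∀ v, v ∈ e → v ∉ f

/-- A finite set of elements of `Sym2 (Fin n)` is a matching if each element is a genuine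
(non-loop) edge and the edges are pairwise disjoint. -/
def IsMatchingIn {n : ℕ} (M : Finset (Sym2 (Fin n))) : Prop :=
  (∀ e ∈ M, ¬ e.IsDiag) ∧ (M : Set (Sym2 (Fin n))).Pairwise EdgeDisjoint

/-- A history of the online Ramsey game on `K_n` with `t` colours: the list of
edges played so far, each together with the colour Painter gave it. -/
abbrev GameHistory (n t : ℕ) := List (Sym2 (Fin n) × Fin t)

/-- A Builder strategy: given the history so far, select the next edge. -/
abbrev BuilderStrategy (n t : ℕ) := GameHistory n t → Sym2 (Fin n)

/-- A Painter strategy: given the history so far and the newly selected edge,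
choose a colour for it. -/
abbrev PainterStrategy (n t : ℕ) := GameHistory n t → Sym2 (Fin n) → Fin t

/-- The history after `k` moves when Builder plays strategy `B` against Painter
strategy `P`. -/
def gamePlay {n t : ℕ} (B : BuilderStrategy n t) (P : PainterStrategy n t) :
    ℕ → GameHistory n t
  | 0 => []
  | k + 1 =>
      let h := gamePlay B P k
      h ++ [(B h, P h (B h))]

/-- Builder plays legally for the first `k` moves against `P`: every selected edge
is a genuine (non-loop) edge not selected before. -/
def BuilderValid {n t : ℕ} (B : BuilderStrategy n t) (P : PainterStrategy n t)
    (k : ℕ) : Prop :=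
  ∀ j < k, ¬ (B (gamePlay B P j)).IsDiag ∧
    B (gamePlay B P j) ∉ (gamePlay B P j).map Prod.fst

/-- The history `h` contains, for some colour `i`, a matching of `r i` edges all
coloured `i`. -/
def HistoryHasMatching (n t : ℕ) (r : Fin t → ℕ) (h : GameHistory n t) : Prop :=
  ∃ i : Fin t, ∃ M : Finset (Sym2 (Fin n)),
    M.card = r i ∧ IsMatchingIn M ∧ ∀ e ∈ M, (e, i) ∈ h

/-- Builder can force, within `k` legal moves on `K_n` with `t` colours, some colour
`i` to contain a matching of `r i` edges, against every Painter strategy. -/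
def BuilderWinsIn (n t : ℕ) (r : Fin t → ℕ) (k : ℕ) : Prop :=
  ∃ B : BuilderStrategy n t, (∀ P : PainterStrategy n t, BuilderValid B P k) ∧
    ∀ P : PainterStrategy n t, HistoryHasMatching n t r (gamePlay B P k)

/-- The restricted online Ramsey number `R̃(r₁K₂,…,r_tK₂; n)`: the least `k` such
that Builder can force a win within `k` moves. -/
noncomputable def restrictedOnlineRamsey (n t : ℕ) (r : Fin t → ℕ) : ℕ :=
  sInf {k | BuilderWinsIn n t r k}

/-- A colouring `c` of (the edges of) `K_N` with `t` colours contains, for some colour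
`i`, a matching of `r i` edges all coloured `i`. -/
def ColoringHasMatching (N t : ℕ) (r : Fin t → ℕ) (c : Sym2 (Fin N) → Fin t) : Prop :=
  ∃ i : Fin t, ∃ M : Finset (Sym2 (Fin N)),
    M.card = r i ∧ IsMatchingIn M ∧ ∀ e ∈ M, c e = i

/-- The classical Ramsey number `R(r₁K₂,…,r_tK₂)`: the least `N` such that every
`t`-colouring of the edges of `K_N` contains, for some `i`, a matching of `r i`
edges in colour `i`. -/
noncomputable def matchingRamsey (t : ℕ) (r : Fin t → ℕ) : ℕ :=
  sInf {N | ∀ c : Sym2 (Fin N) → Fin t, ColoringHasMatching N t r c}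

lemma fin2_cases : ∀ (i a b : Fin 2), a ≠ b → i = a ∨ i = b := by decide

/-- The vertex set of an edge. -/
def evs {n : ℕ} (e : Sym2 (Fin n)) : Finset (Fin n) :=
  Finset.univ.filter (· ∈ e)

@[simp] lemma mem_evs {n : ℕ} {e : Sym2 (Fin n)} {v : Fin n} : v ∈ evs e ↔ v ∈ e := by
  simp [evs]

lemma card_evs {n : ℕ} {e : Sym2 (Fin n)} (he : ¬ e.IsDiag) : (evs e).card = 2 := by
  induction e using Sym2.inductionOn with
  | hf a b =>
    rw [Sym2.isDiag_iff_proj_eq] at he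
    have : evs s(a, b) = {a, b} := by
      ext v; simp [Sym2.mem_iff]
    rw [this, Finset.card_pair he]

/-- A set of at least `2k` vertices contains a matching of size `k`. -/
lemma exists_matching {n : ℕ} : ∀ (k : ℕ) (S : Finset (Fin n)), 2 * k ≤ S.card →
    ∃ M : Finset (Sym2 (Fin n)), M.card = k ∧ IsMatchingIn M ∧
      ∀ e ∈ M, ∀ v, v ∈ e → v ∈ S
  | 0, S, _ => ⟨∅, rfl, ⟨by simp, by simp [Set.Pairwise]⟩, by simp⟩
  | k + 1, S, h => by
    obtain ⟨a, ha, b, hb, hab⟩ := Finset.one_lt_card.mp (show 1 < S.card by omega)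
    have hsubS : ({a, b} : Finset (Fin n)) ⊆ S := by
      simp [Finset.insert_subset_iff, ha, hb]
    have hc2 : ({a, b} : Finset (Fin n)).card = 2 := Finset.card_pair hab
    obtain ⟨M, hcard, ⟨hnd, hpw⟩, hsub⟩ := exists_matching k (S \ {a, b})
      (by rw [Finset.card_sdiff_of_subset hsubS, hc2]; omega)
    have hnm : s(a, b) ∉ M := by
      intro hm
      have := hsub _ hm a (by simp)
      simp at this
    have hdisj : ∀ f ∈ M, EdgeDisjoint s(a, b) f ∧ EdgeDisjoint f s(a, b) := by
      intro f hf
      have h1 : EdgeDisjoint s(a, b) f := by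
        intro v hv hvf
        have := hsub _ hf v hvf
        rw [Sym2.mem_iff] at hv
        simp at this
        rcases hv with rfl | rfl <;> simp at this
      exact ⟨h1, fun v hv hvf => h1 v hvf hv⟩
    refine ⟨insert s(a, b) M, ?_, ⟨?_, ?_⟩, ?_⟩
    · rw [Finset.card_insert_of_notMem hnm, hcard]
    · intro e he
      rcases Finset.mem_insert.mp he with rfl | he
      · rw [Sym2.isDiag_iff_proj_eq]; exact hab
      · exact hnd e he
    · rw [Finset.coe_insert]
      refine Set.pairwise_insert.mpr ⟨hpw, fun f hf _ => hdisj f hf⟩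
    · intro e he v hv
      rcases Finset.mem_insert.mp he with rfl | he
      · rw [Sym2.mem_iff] at hv
        rcases hv with rfl | rfl
        · exact ha
        · exact hb
      · exact (Finset.mem_sdiff.mp (hsub e he v hv)).1

/-- Key induction: any 2-colouring of the complete graph on a set of at least
`3r - 1` vertices contains a monochromatic matching of size `r`. -/
lemma key_matching {n : ℕ} (c : Sym2 (Fin n) → Fin 2) :
    ∀ (r : ℕ) (S : Finset (Fin n)), 3 * r ≤ S.card + 1 →
    ∃ i : Fin 2, ∃ M : Finset (Sym2 (Fin n)), M.card = r ∧ IsMatchingIn M ∧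
      (∀ e ∈ M, ∀ v, v ∈ e → v ∈ S) ∧ ∀ e ∈ M, c e = i
  | 0, S, _ => ⟨0, ∅, rfl, ⟨by simp, by simp [Set.Pairwise]⟩, by simp, by simp⟩
  | r + 1, S, h => by
    by_cases hch : ∃ x ∈ S, ∃ y ∈ S, ∃ z ∈ S, x ≠ y ∧ y ≠ z ∧ x ≠ z ∧
        c s(x, y) ≠ c s(y, z)
    · -- a bicoloured cherry exists
      obtain ⟨x, hx, y, hy, z, hz, hxy, hyz, hxz, hne⟩ := hch
      have hsubS : ({x, y, z} : Finset (Fin n)) ⊆ S := by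
        simp [Finset.insert_subset_iff, hx, hy, hz]
      have hc3 : ({x, y, z} : Finset (Fin n)).card = 3 := by
        rw [Finset.card_insert_of_notMem (by simp [hxy, hxz]),
          Finset.card_pair hyz]
      obtain ⟨i, M, hcard, ⟨hnd, hpw⟩, hsub, hcol⟩ := key_matching c r (S \ {x, y, z})
        (by rw [Finset.card_sdiff_of_subset hsubS, hc3]; omega)
      -- pick the cherry edge of colour i
      obtain he0 | he0 := fin2_cases i (c s(x, y)) (c s(y, z)) hne
      · -- use edge s(x,y)
        have hnm : s(x, y) ∉ M := by
          intro hm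
          have := hsub _ hm x (by simp)
          simp at this
        refine ⟨i, insert s(x, y) M, ?_, ⟨?_, ?_⟩, ?_, ?_⟩
        · rw [Finset.card_insert_of_notMem hnm, hcard]
        · intro e he
          rcases Finset.mem_insert.mp he with rfl | he
          · rw [Sym2.isDiag_iff_proj_eq]; exact hxy
          · exact hnd e he
        · rw [Finset.coe_insert]
          refine Set.pairwise_insert.mpr ⟨hpw, fun f hf _ => ?_⟩
          have h1 : EdgeDisjoint s(x, y) f := by
            intro v hv hvf
            have := hsub _ hf v hvf
            rw [Sym2.mem_iff] at hv
            simp at this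
            rcases hv with rfl | rfl <;> simp at this
          exact ⟨h1, fun v hv hvf => h1 v hvf hv⟩
        · intro e he v hv
          rcases Finset.mem_insert.mp he with rfl | he
          · rw [Sym2.mem_iff] at hv
            rcases hv with rfl | rfl
            · exact hx
            · exact hy
          · exact (Finset.mem_sdiff.mp (hsub e he v hv)).1
        · intro e he
          rcases Finset.mem_insert.mp he with rfl | he
          · exact he0.symm
          · exact hcol e he
      · -- use edge s(y,z)
        have hnm : s(y, z) ∉ M := by
          intro hm
          have := hsub _ hm y (by simp)
          simp at this
        refine ⟨i, insert s(y, z) M, ?_, ⟨?_, ?_⟩, ?_, ?_⟩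
        · rw [Finset.card_insert_of_notMem hnm, hcard]
        · intro e he
          rcases Finset.mem_insert.mp he with rfl | he
          · rw [Sym2.isDiag_iff_proj_eq]; exact hyz
          · exact hnd e he
        · rw [Finset.coe_insert]
          refine Set.pairwise_insert.mpr ⟨hpw, fun f hf _ => ?_⟩
          have h1 : EdgeDisjoint s(y, z) f := by
            intro v hv hvf
            have := hsub _ hf v hvf
            rw [Sym2.mem_iff] at hv
            simp at this
            rcases hv with rfl | rfl <;> simp at this
          exact ⟨h1, fun v hv hvf => h1 v hvf hv⟩
        · intro e he v hv
          rcases Finset.mem_insert.mp he with rfl | he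
          · rw [Sym2.mem_iff] at hv
            rcases hv with rfl | rfl
            · exact hy
            · exact hz
          · exact (Finset.mem_sdiff.mp (hsub e he v hv)).1
        · intro e he
          rcases Finset.mem_insert.mp he with rfl | he
          · exact he0.symm
          · exact hcol e he
    · -- no bicoloured cherry: all edges inside S have the same colour
      push_neg at hch
      have h1 : ∀ x ∈ S, ∀ y ∈ S, ∀ z ∈ S, x ≠ y → y ≠ z → x ≠ z →
          c s(x, y) = c s(y, z) := fun x hx y hy z hz h1 h2 h3 =>
        hch x hx y hy z hz h1 h2 h3
      obtain ⟨x₀, hx₀, y₀, hy₀, hxy₀⟩ := Finset.one_lt_card.mp (show 1 < S.card by omega)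
      have hall : ∀ a ∈ S, ∀ b ∈ S, a ≠ b → c s(a, b) = c s(x₀, y₀) := by
        intro a ha b hb hab
        by_cases hbx : b = x₀
        · subst hbx
          by_cases hay : a = y₀
          · subst hay; rw [Sym2.eq_swap]
          · exact h1 a ha b hb y₀ hy₀ hab hxy₀ hay
        · by_cases hby : b = y₀
          · subst hby
            by_cases hax : a = x₀
            · subst hax; rfl
            · rw [h1 a ha b hb x₀ hx₀ hab hbx hax, Sym2.eq_swap]
          · by_cases hax : a = x₀
            · subst hax
              rw [Sym2.eq_swap, h1 b hb a ha y₀ hy₀ (Ne.symm hab) hxy₀ hby]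
            · by_cases hay : a = y₀
              · subst hay
                rw [Sym2.eq_swap, h1 b hb a ha x₀ hx₀ (Ne.symm hab) (Ne.symm hxy₀) hbx,
                  Sym2.eq_swap]
              · rw [h1 a ha b hb x₀ hx₀ hab hbx hax,
                  h1 b hb x₀ hx₀ y₀ hy₀ hbx hxy₀ hby]
      obtain ⟨M, hcard, hM, hsub⟩ := exists_matching (r + 1) S (by omega)
      refine ⟨c s(x₀, y₀), M, hcard, hM, hsub, ?_⟩
      intro e he
      induction e using Sym2.inductionOn with
      | hf a b =>
        have hab : a ≠ b := by
          have := hM.1 _ he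
          rw [Sym2.isDiag_iff_proj_eq] at this
          exact this
        exact hall a (hsub _ he a (by simp)) b (hsub _ he b (by simp)) hab

/-- For `r ≥ 1`, the 2-colour Ramsey number of `rK₂` equals `3r − 1`: every 2-colouring
of `K_{3r−1}` has a monochromatic matching of size `r`, and some 2-colouring of
`K_{3r−2}` has none. -/
theorem ramsey_two_colour_matching (r : ℕ) (hr : 1 ≤ r) :
    (∀ c : Sym2 (Fin (3 * r - 1)) → Fin 2,
        ColoringHasMatching (3 * r - 1) 2 (fun _ => r) c) ∧
      (∃ c : Sym2 (Fin (3 * r - 2)) → Fin 2,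
        ¬ ColoringHasMatching (3 * r - 2) 2 (fun _ => r) c) := by
  constructor
  · -- upper bound
    intro c
    obtain ⟨i, M, hcard, hM, _, hcol⟩ := key_matching c r (Finset.univ : Finset (Fin (3 * r - 1)))
      (by rw [Finset.card_univ, Fintype.card_fin]; omega)
    exact ⟨i, M, hcard, hM, hcol⟩
  · -- lower bound
    classical
    refine ⟨fun e => if ∀ v, v ∈ e → (v : ℕ) < 2 * r - 1 then 0 else 1, ?_⟩
    rintro ⟨i, M, hcard, ⟨hnd, hpw⟩, hcol⟩
    obtain hi | hi := fin2_cases i 0 1 (by decide)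
    · -- colour 0 : all edges inside the first 2r-1 vertices
      subst hi
      have hsmall : ∀ e ∈ M, ∀ v, v ∈ e → (v : ℕ) < 2 * r - 1 := by
        intro e he v hv
        have hc : (if ∀ v, v ∈ e → (v : ℕ) < 2 * r - 1 then (0 : Fin 2) else 1) = 0 :=
          hcol e he
        by_cases hcond : ∀ v, v ∈ e → (v : ℕ) < 2 * r - 1
        · exact hcond v hv
        · rw [if_neg hcond] at hc
          exact absurd hc (by decide)
      have hdisj : ∀ e ∈ M, ∀ f ∈ M, e ≠ f → Disjoint (evs e) (evs f) := by
        intro e he f hf hef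
        rw [Finset.disjoint_left]
        intro v hv hvf
        exact hpw he hf hef v (mem_evs.mp hv) (mem_evs.mp hvf)
      have hcardV : (M.biUnion evs).card = 2 * r := by
        rw [Finset.card_biUnion hdisj]
        rw [Finset.sum_congr rfl (fun e he => card_evs (hnd e he))]
        simp [hcard, Nat.mul_comm]
      have hle : (M.biUnion evs).card ≤ (Finset.range (2 * r - 1)).card := by
        refine Finset.card_le_card_of_injOn (fun v => (v : ℕ)) ?_ ?_
        · intro v hv
          rw [Finset.mem_coe, Finset.mem_biUnion] at hv
          obtain ⟨e, he, hv⟩ := hv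
          exact Finset.mem_range.mpr (hsmall e he v (mem_evs.mp hv))
        · intro v _ w _ hvw
          exact Fin.val_injective hvw
      rw [hcardV, Finset.card_range] at hle
      omega
    · -- colour 1 : every edge meets the last r-1 vertices
      subst hi
      have hbig : ∀ e ∈ M, ∃ v, v ∈ e ∧ 2 * r - 1 ≤ (v : ℕ) := by
        intro e he
        have hc : (if ∀ v, v ∈ e → (v : ℕ) < 2 * r - 1 then (0 : Fin 2) else 1) = 1 :=
          hcol e he
        by_cases hcond : ∀ v, v ∈ e → (v : ℕ) < 2 * r - 1
        · rw [if_pos hcond] at hc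
          exact absurd hc (by decide)
        · push_neg at hcond
          obtain ⟨v, hv, hv'⟩ := hcond
          exact ⟨v, hv, by omega⟩
      let f : Sym2 (Fin (3 * r - 2)) → ℕ := fun e =>
        if h : ∃ v, v ∈ e ∧ 2 * r - 1 ≤ (v : ℕ) then (h.choose : ℕ) else 0
      have hfe : ∀ (e : Sym2 (Fin (3 * r - 2)))
          (h : ∃ v, v ∈ e ∧ 2 * r - 1 ≤ (v : ℕ)),
          h.choose ∈ e ∧ 2 * r - 1 ≤ (h.choose : ℕ) ∧ f e = (h.choose : ℕ) :=
        fun e h => ⟨h.choose_spec.1, h.choose_spec.2, dif_pos h⟩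
      have hle : M.card ≤ (Finset.Ico (2 * r - 1) (3 * r - 2)).card := by
        refine Finset.card_le_card_of_injOn f ?_ ?_
        · intro e he
          obtain ⟨h1, h2, h3⟩ := hfe e (hbig e he)
          rw [h3]
          exact Finset.mem_Ico.mpr ⟨h2, (hbig e he).choose.isLt⟩
        · intro e he e' he' hee
          obtain ⟨h1, -, h3⟩ := hfe e (hbig e he)
          obtain ⟨h1', -, h3'⟩ := hfe e' (hbig e' he')
          by_contra hne
          have hv : ((hbig e he).choose : ℕ) = ((hbig e' he').choose : ℕ) := by
            rw [← h3, ← h3', hee]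
          have heq : (hbig e he).choose = (hbig e' he').choose := Fin.val_injective hv
          exact hpw he he' hne _ h1 (by rw [heq]; exact h1')
      have hMr : M.card = r := hcard
      rw [hMr, Nat.card_Ico] at hle
      omega
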